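/- Let F(z) = ∑_{n≥0} c_n zⁿ be entire with |F(z)| ≤ exp(|z|²) for all z, let N ∈ ℕ, and T_N F(z) = ∑_{0≤n≤N} c_n zⁿ. Then |T_N F(z)| ≤ (N+1)·|z|^N·(2e/N)^{N/2} for all |z| > √(N/2) (N ≥ 1). -/

import Mathlib

open Real Finset

lemma cauchy_coeff_bound (F : ℂ → ℂ) (hF : Differentiable ℂ F)
    (hbd : ∀ z : ℂ, ‖F z‖ ≤ Real.exp (‖z‖ ^ 2))
    {r : ℝ} (hr : 0 < r) (n : ℕ) :
    ‖iteratedDeriv n F 0 / (Nat.factorial n : ℂ)‖ ≤ Real.exp (r ^ 2) / r ^ n := by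
  lift r to NNReal using hr.le with R hR
  subst hR
  have hR0 : (0 : NNReal) < R := by exact_mod_cast hr
  have h := hF.hasFPowerSeriesOnBall 0 hR0
  set p := cauchyPowerSeries F 0 R with hp
  have hco : (Nat.factorial n : ℂ) • (p n fun _ ↦ (1 : ℂ)) = iteratedDeriv n F 0 := by
    rw [iteratedDeriv_eq_iteratedFDeriv, ← h.factorial_smul 1 n]
    simp [nsmul_eq_mul]
  have hnorm : ‖p n‖ ≤ Real.exp ((R : ℝ) ^ 2) * ((R : ℝ))⁻¹ ^ n := by
    have h1 := norm_cauchyPowerSeries_le F 0 R n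
    have h2 : (∫ θ : ℝ in (0)..2 * π, ‖F (circleMap 0 R θ)‖)
        ≤ ∫ _ : ℝ in (0)..2 * π, Real.exp ((R : ℝ) ^ 2) := by
      apply intervalIntegral.integral_mono_on Real.two_pi_pos.le
      · exact ((hF.continuous.comp (continuous_circleMap 0 R)).norm).intervalIntegrable _ _
      · exact intervalIntegrable_const
      · intro θ _
        have := hbd (circleMap 0 R θ)
        rwa [norm_circleMap_zero, abs_of_nonneg (R.coe_nonneg)] at this
    rw [intervalIntegral.integral_const, smul_eq_mul, sub_zero] at h2
    calc ‖p n‖ ≤ ((2 * π)⁻¹ * ∫ θ : ℝ in (0)..2 * π, ‖F (circleMap 0 R θ)‖) * |(R : ℝ)|⁻¹ ^ n :=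
          h1
      _ ≤ ((2 * π)⁻¹ * (2 * π * Real.exp ((R : ℝ) ^ 2))) * |(R : ℝ)|⁻¹ ^ n := by
          gcongr
      _ = Real.exp ((R : ℝ) ^ 2) * ((R : ℝ))⁻¹ ^ n := by
          rw [inv_mul_cancel_left₀ Real.two_pi_pos.ne', abs_of_nonneg R.coe_nonneg]
  have happ : ‖p n fun _ ↦ (1 : ℂ)‖ ≤ ‖p n‖ := by
    have := (p n).le_opNorm fun _ ↦ (1 : ℂ)
    simpa using this
  have hfac : (0 : ℝ) < (Nat.factorial n : ℝ) := by positivity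
  rw [norm_div, Complex.norm_natCast, div_le_div_iff₀ hfac (by positivity)]
  have : ‖iteratedDeriv n F 0‖ = (Nat.factorial n : ℝ) * ‖p n fun _ ↦ (1 : ℂ)‖ := by
    rw [← hco]
    simp [norm_smul]
  rw [this]
  calc (Nat.factorial n : ℝ) * ‖p n fun _ ↦ (1 : ℂ)‖ * (R : ℝ) ^ n
      ≤ (Nat.factorial n : ℝ) * (Real.exp ((R : ℝ) ^ 2) * ((R : ℝ))⁻¹ ^ n) * (R : ℝ) ^ n := by
        gcongr
        exact happ.trans hnorm
    _ = Real.exp ((R : ℝ) ^ 2) * (Nat.factorial n : ℝ) := by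
        field_simp
        rw [← mul_pow, one_div_mul_cancel hr.ne', one_pow]

theorem stmt_9 (F : ℂ → ℂ) (hF : Differentiable ℂ F)
    (hbd : ∀ z : ℂ, ‖F z‖ ≤ Real.exp (‖z‖ ^ 2)) (N : ℕ) (hN : 1 ≤ N)
    (z : ℂ) (hz : Real.sqrt ((N : ℝ) / 2) < ‖z‖) :
    ‖∑ n ∈ Finset.range (N + 1), (iteratedDeriv n F 0 / (Nat.factorial n : ℂ)) * z ^ n‖
      ≤ ((N : ℝ) + 1) * ‖z‖ ^ N * (2 * Real.exp 1 / (N : ℝ)) ^ ((N : ℝ) / 2) := by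
  have hN0 : (0 : ℝ) < (N : ℝ) := by exact_mod_cast hN
  set t : ℝ := (N : ℝ) / 2 with ht
  have ht0 : 0 < t := by positivity
  set r : ℝ := Real.sqrt t with hrdef
  have hr0 : 0 < r := Real.sqrt_pos.mpr ht0
  have hr2 : r ^ 2 = t := Real.sq_sqrt ht0.le
  have hrz : r < ‖z‖ := hz
  have hrN : r ^ N = t ^ ((N : ℝ) / 2) := by
    rw [hrdef, Real.sqrt_eq_rpow, ← Real.rpow_natCast (t ^ (1/2 : ℝ)) N,
      ← Real.rpow_mul ht0.le]
    ring_nf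
  have hkey : Real.exp t / t ^ ((N : ℝ) / 2) = (2 * Real.exp 1 / (N : ℝ)) ^ ((N : ℝ) / 2) := by
    have : 2 * Real.exp 1 / (N : ℝ) = Real.exp 1 / t := by
      rw [ht]; field_simp
    rw [this, Real.div_rpow (Real.exp_pos 1).le ht0.le, Real.exp_one_rpow, ht]
  have key : ∀ n ∈ Finset.range (N + 1),
      ‖(iteratedDeriv n F 0 / (Nat.factorial n : ℂ)) * z ^ n‖
        ≤ ‖z‖ ^ N * (2 * Real.exp 1 / (N : ℝ)) ^ ((N : ℝ) / 2) := by
    intro n hn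
    have hnN : n ≤ N := Nat.lt_succ_iff.mp (Finset.mem_range.mp hn)
    have h1 := cauchy_coeff_bound F hF hbd hr0 n
    have hone : (1 : ℝ) ≤ ‖z‖ / r := (one_le_div hr0).mpr hrz.le
    calc ‖(iteratedDeriv n F 0 / (Nat.factorial n : ℂ)) * z ^ n‖
        = ‖iteratedDeriv n F 0 / (Nat.factorial n : ℂ)‖ * ‖z‖ ^ n := by
          rw [norm_mul, norm_pow]
      _ ≤ (Real.exp (r ^ 2) / r ^ n) * ‖z‖ ^ n := by
          gcongr
      _ = Real.exp t * (‖z‖ / r) ^ n := by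
          rw [hr2, div_pow]; ring
      _ ≤ Real.exp t * (‖z‖ / r) ^ N := by
          gcongr
      _ = Real.exp t / t ^ ((N : ℝ) / 2) * ‖z‖ ^ N := by
          rw [div_pow, ← hrN]; field_simp
      _ = ‖z‖ ^ N * (2 * Real.exp 1 / (N : ℝ)) ^ ((N : ℝ) / 2) := by
          rw [hkey]; ring
  calc ‖∑ n ∈ Finset.range (N + 1),
        (iteratedDeriv n F 0 / (Nat.factorial n : ℂ)) * z ^ n‖
      ≤ ∑ n ∈ Finset.range (N + 1),
          ‖(iteratedDeriv n F 0 / (Nat.factorial n : ℂ)) * z ^ n‖ :=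
        norm_sum_le _ _
    _ ≤ ∑ _n ∈ Finset.range (N + 1),
          ‖z‖ ^ N * (2 * Real.exp 1 / (N : ℝ)) ^ ((N : ℝ) / 2) :=
        Finset.sum_le_sum key
    _ = ((N : ℝ) + 1) * ‖z‖ ^ N * (2 * Real.exp 1 / (N : ℝ)) ^ ((N : ℝ) / 2) := by
        rw [Finset.sum_const, Finset.card_range, nsmul_eq_mul]
        push_cast
        ring
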